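/- arXiv:1911.11640 — 6 statements merged into one kernel-verified Lean document; each statement's English description precedes it below -/
import Mathlib

section
/- For any two policies π and π̃ on a finite-state discounted MDP, the total expected reward satisfies η(π̃) = η(π) + Σ_s ρ_{π̃}(s) Σ_a π̃(a|s) A_π(s,a), where ρ_{π̃} is the unnormalized discounted visitation frequency of π̃ and A_π is the advantage function of π. -/
open scoped BigOperators

section MDPdefs

variable (S A : Type) [Fintype S] [Fintype A]

structure MDP where
  P : S → A → S → ℝ
  r : S → A → ℝ
  ρ0 : S → ℝ
  γ : ℝ

variable {S A}

def IsPolicy (π : S → A → ℝ) : Prop :=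
  (∀ s a, 0 ≤ π s a) ∧ ∀ s, ∑ a, π s a = 1

def MDP.Valid (M : MDP S A) : Prop :=
  (∀ s a s', 0 ≤ M.P s a s') ∧ (∀ s a, ∑ s', M.P s a s' = 1) ∧
  (∀ s, 0 ≤ M.ρ0 s) ∧ (∑ s, M.ρ0 s = 1) ∧ 0 < M.γ ∧ M.γ < 1

/-- Distribution of the state at time `t` when the initial state follows `ρ0`
and the trajectory follows policy `π`. -/
noncomputable def MDP.stateDist (M : MDP S A) (π : S → A → ℝ) : ℕ → S → ℝ
  | 0 => M.ρ0
  | (t+1) => fun s' => ∑ s, ∑ a, M.stateDist π t s * π s a * M.P s a s'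

/-- The unnormalized discounted visitation frequency `ρ_π`. -/
noncomputable def MDP.ρvisit (M : MDP S A) (π : S → A → ℝ) (s : S) : ℝ :=
  ∑' t : ℕ, M.γ ^ t * M.stateDist π t s

/-- The total expected discounted reward `η(π)`. -/
noncomputable def MDP.η (M : MDP S A) (π : S → A → ℝ) : ℝ :=
  ∑' t : ℕ, M.γ ^ t * ∑ s, M.stateDist π t s * ∑ a, π s a * M.r s a

/-- Distribution of the state at time `t` starting deterministically from `s0`. -/
noncomputable def MDP.distFrom [DecidableEq S] (M : MDP S A) (π : S → A → ℝ) (s0 : S) :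
    ℕ → S → ℝ
  | 0 => fun s => if s = s0 then 1 else 0
  | (t+1) => fun s' => ∑ s, ∑ a, M.distFrom π s0 t s * π s a * M.P s a s'

/-- The state value function `V_π`. -/
noncomputable def MDP.V [DecidableEq S] (M : MDP S A) (π : S → A → ℝ) (s0 : S) : ℝ :=
  ∑' t : ℕ, M.γ ^ t * ∑ s, M.distFrom π s0 t s * ∑ a, π s a * M.r s a

/-- The action value function `Q_π`. -/
noncomputable def MDP.Q [DecidableEq S] (M : MDP S A) (π : S → A → ℝ) (s : S) (a : A) : ℝ :=
  M.r s a + M.γ * ∑ s', M.P s a s' * M.V π s'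

/-- The advantage function `A_π`. -/
noncomputable def MDP.Adv [DecidableEq S] (M : MDP S A) (π : S → A → ℝ) (s : S) (a : A) : ℝ :=
  M.Q π s a - M.V π s

end MDPdefs

section AuxLemmas

variable {S A : Type} [Fintype S] [Fintype A]

lemma step_nonneg (M : MDP S A) (hM : M.Valid) (π : S → A → ℝ) (hπ : IsPolicy π)
    (d : S → ℝ) (hd : ∀ s, 0 ≤ d s) (s' : S) :
    0 ≤ ∑ s, ∑ a, d s * π s a * M.P s a s' := by
  refine Finset.sum_nonneg fun s _ => Finset.sum_nonneg fun a _ => ?_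
  exact mul_nonneg (mul_nonneg (hd s) (hπ.1 s a)) (hM.1 s a s')

lemma step_sum (M : MDP S A) (hM : M.Valid) (π : S → A → ℝ) (hπ : IsPolicy π)
    (d : S → ℝ) (hd : ∑ s, d s = 1) :
    ∑ s', ∑ s, ∑ a, d s * π s a * M.P s a s' = 1 := by
  rw [Finset.sum_comm]
  have h : ∀ s, ∑ s', ∑ a, d s * π s a * M.P s a s' = d s := by
    intro s
    rw [Finset.sum_comm]
    have : ∀ a, ∑ s', d s * π s a * M.P s a s' = d s * π s a := by
      intro a
      rw [← Finset.mul_sum, hM.2.1 s a, mul_one]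
    simp only [this, ← Finset.mul_sum, hπ.2 s, mul_one]
  simp only [h, hd]

lemma stateDist_nonneg (M : MDP S A) (hM : M.Valid) (π : S → A → ℝ) (hπ : IsPolicy π)
    (t : ℕ) (s : S) : 0 ≤ M.stateDist π t s := by
  induction t generalizing s with
  | zero => exact hM.2.2.1 s
  | succ t ih => exact step_nonneg M hM π hπ _ ih s

lemma stateDist_sum_one (M : MDP S A) (hM : M.Valid) (π : S → A → ℝ) (hπ : IsPolicy π)
    (t : ℕ) : ∑ s, M.stateDist π t s = 1 := by
  induction t with
  | zero => exact hM.2.2.2.1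
  | succ t ih => exact step_sum M hM π hπ _ ih

lemma distFrom_nonneg [DecidableEq S] (M : MDP S A) (hM : M.Valid) (π : S → A → ℝ)
    (hπ : IsPolicy π) (s0 : S) (t : ℕ) (s : S) : 0 ≤ M.distFrom π s0 t s := by
  induction t generalizing s with
  | zero => simp only [MDP.distFrom]; split <;> norm_num
  | succ t ih => exact step_nonneg M hM π hπ _ ih s

lemma distFrom_sum_one [DecidableEq S] (M : MDP S A) (hM : M.Valid) (π : S → A → ℝ)
    (hπ : IsPolicy π) (s0 : S) (t : ℕ) : ∑ s, M.distFrom π s0 t s = 1 := by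
  induction t with
  | zero => simp [MDP.distFrom]
  | succ t ih => exact step_sum M hM π hπ _ ih

/-- averaging against a probability vector preserves a bound -/
lemma avg_abs_le (d f : S → ℝ) (B : ℝ) (hd0 : ∀ s, 0 ≤ d s) (hd1 : ∑ s, d s = 1)
    (hf : ∀ s, |f s| ≤ B) : |∑ s, d s * f s| ≤ B := by
  calc |∑ s, d s * f s| ≤ ∑ s, |d s * f s| := Finset.abs_sum_le_sum_abs _ _
    _ ≤ ∑ s, d s * B := by
        refine Finset.sum_le_sum fun s _ => ?_
        rw [abs_mul, abs_of_nonneg (hd0 s)]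
        exact mul_le_mul_of_nonneg_left (hf s) (hd0 s)
    _ = B := by rw [← Finset.sum_mul, hd1, one_mul]

lemma summable_geom_bound {γ : ℝ} (hγ0 : 0 ≤ γ) (hγ1 : γ < 1) (X : ℕ → ℝ) (B : ℝ)
    (hX : ∀ t, |X t| ≤ B) : Summable (fun t => γ ^ t * X t) := by
  refine Summable.of_norm_bounded (g := fun t => B * γ ^ t)
    ((summable_geometric_of_lt_one hγ0 hγ1).mul_left B) fun t => ?_
  rw [Real.norm_eq_abs, abs_mul, abs_pow, abs_of_nonneg hγ0, mul_comm]
  exact mul_le_mul_of_nonneg_right (hX t) (pow_nonneg hγ0 t)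

lemma tsum_geom_bound {γ : ℝ} (hγ0 : 0 ≤ γ) (hγ1 : γ < 1) (X : ℕ → ℝ) (B : ℝ)
    (hX : ∀ t, |X t| ≤ B) : |∑' t, γ ^ t * X t| ≤ B * (1 - γ)⁻¹ := by
  have h1 : Summable (fun t => γ ^ t * X t) := summable_geom_bound hγ0 hγ1 X B hX
  have h2 : Summable (fun t : ℕ => B * γ ^ t) :=
    (summable_geometric_of_lt_one hγ0 hγ1).mul_left B
  calc |∑' t, γ ^ t * X t| ≤ ∑' t, |γ ^ t * X t| := by
        rw [← Real.norm_eq_abs]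
        exact norm_tsum_le_tsum_norm h1.abs
    _ ≤ ∑' t : ℕ, B * γ ^ t := by
        refine Summable.tsum_le_tsum (fun t => ?_) h1.abs h2
        rw [abs_mul, abs_pow, abs_of_nonneg hγ0, mul_comm]
        exact mul_le_mul_of_nonneg_right (hX t) (pow_nonneg hγ0 t)
    _ = B * (1 - γ)⁻¹ := by rw [tsum_mul_left, tsum_geometric_of_lt_one hγ0 hγ1]

end AuxLemmas

section Aux2

variable {S A : Type} [Fintype S] [Fintype A]

/-- reordering a "one-step" triple sum -/
lemma step_avg (M : MDP S A) (π : S → A → ℝ) (d g : S → ℝ) :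
    ∑ s, d s * ∑ a, π s a * ∑ s'', M.P s a s'' * g s''
      = ∑ s'', (∑ s, ∑ a, d s * π s a * M.P s a s'') * g s'' := by
  calc ∑ s, d s * ∑ a, π s a * ∑ s'', M.P s a s'' * g s''
      = ∑ s, ∑ a, ∑ s'', d s * π s a * M.P s a s'' * g s'' := by
        refine Finset.sum_congr rfl fun s _ => ?_
        rw [Finset.mul_sum]
        refine Finset.sum_congr rfl fun a _ => ?_
        rw [Finset.mul_sum, Finset.mul_sum]
        exact Finset.sum_congr rfl fun s'' _ => by ring
    _ = ∑ s, ∑ s'', ∑ a, d s * π s a * M.P s a s'' * g s'' :=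
        Finset.sum_congr rfl fun s _ => Finset.sum_comm
    _ = ∑ s'', ∑ s, ∑ a, d s * π s a * M.P s a s'' * g s'' := Finset.sum_comm
    _ = ∑ s'', (∑ s, ∑ a, d s * π s a * M.P s a s'') * g s'' := by
        refine Finset.sum_congr rfl fun s'' _ => ?_
        rw [Finset.sum_mul]
        exact Finset.sum_congr rfl fun s _ => (Finset.sum_mul _ _ _).symm

lemma mixture [DecidableEq S] (M : MDP S A) (π : S → A → ℝ) (t : ℕ) (s : S) :
    M.stateDist π t s = ∑ s0, M.ρ0 s0 * M.distFrom π s0 t s := by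
  induction t generalizing s with
  | zero => simp [MDP.stateDist, MDP.distFrom]
  | succ t ih =>
    show (∑ s', ∑ a, M.stateDist π t s' * π s' a * M.P s' a s) = _
    calc ∑ s', ∑ a, M.stateDist π t s' * π s' a * M.P s' a s
        = ∑ s', ∑ a, ∑ s0, M.ρ0 s0 * (M.distFrom π s0 t s' * π s' a * M.P s' a s) := by
          refine Finset.sum_congr rfl fun s' _ => Finset.sum_congr rfl fun a _ => ?_
          rw [ih, Finset.sum_mul, Finset.sum_mul]
          exact Finset.sum_congr rfl fun s0 _ => by ring
      _ = ∑ s', ∑ s0, ∑ a, M.ρ0 s0 * (M.distFrom π s0 t s' * π s' a * M.P s' a s) :=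
          Finset.sum_congr rfl fun s' _ => Finset.sum_comm
      _ = ∑ s0, ∑ s', ∑ a, M.ρ0 s0 * (M.distFrom π s0 t s' * π s' a * M.P s' a s) :=
          Finset.sum_comm
      _ = ∑ s0, M.ρ0 s0 * M.distFrom π s0 (t+1) s := by
          refine Finset.sum_congr rfl fun s0 _ => ?_
          show _ = M.ρ0 s0 * ∑ s', ∑ a, M.distFrom π s0 t s' * π s' a * M.P s' a s
          simp only [Finset.mul_sum]

end Aux2

section Aux3

variable {S A : Type} [Fintype S] [Fintype A]

lemma R_abs_le (M : MDP S A) (π : S → A → ℝ) (hπ : IsPolicy π) (s : S) :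
    |∑ a, π s a * M.r s a| ≤ ∑ s', ∑ a, |M.r s' a| := by
  calc |∑ a, π s a * M.r s a| ≤ ∑ a, |π s a * M.r s a| := Finset.abs_sum_le_sum_abs _ _
    _ ≤ ∑ a, |M.r s a| := by
        refine Finset.sum_le_sum fun a _ => ?_
        rw [abs_mul, abs_of_nonneg (hπ.1 s a)]
        have h1 : π s a ≤ 1 := by
          rw [← hπ.2 s]
          exact Finset.single_le_sum (fun a' _ => hπ.1 s a') (Finset.mem_univ a)
        nlinarith [abs_nonneg (M.r s a)]
    _ ≤ ∑ s', ∑ a, |M.r s' a| :=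
        Finset.single_le_sum (f := fun s' => ∑ a, |M.r s' a|)
          (fun s' _ => Finset.sum_nonneg fun a _ => abs_nonneg _) (Finset.mem_univ s)

lemma V_abs_le [DecidableEq S] (M : MDP S A) (hM : M.Valid) (π : S → A → ℝ)
    (hπ : IsPolicy π) (s0 : S) :
    |M.V π s0| ≤ (∑ s', ∑ a, |M.r s' a|) * (1 - M.γ)⁻¹ := by
  refine tsum_geom_bound hM.2.2.2.2.1.le hM.2.2.2.2.2 _ _ fun t => ?_
  exact avg_abs_le _ _ _ (distFrom_nonneg M hM π hπ s0 t) (distFrom_sum_one M hM π hπ s0 t)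
    (R_abs_le M π hπ)

lemma eta_eq [DecidableEq S] (M : MDP S A) (hM : M.Valid) (π : S → A → ℝ)
    (hπ : IsPolicy π) : M.η π = ∑ s0, M.ρ0 s0 * M.V π s0 := by
  have hγ0 := hM.2.2.2.2.1.le
  have hγ1 := hM.2.2.2.2.2
  set B := ∑ s', ∑ a, |M.r s' a| with hBdef
  have hg : ∀ (t : ℕ) (s0 : S), |∑ s, M.distFrom π s0 t s * ∑ a, π s a * M.r s a| ≤ B :=
    fun t s0 => avg_abs_le _ _ _ (distFrom_nonneg M hM π hπ s0 t)
      (distFrom_sum_one M hM π hπ s0 t) (R_abs_le M π hπ)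
  have hsum : ∀ s0 : S, Summable (fun t : ℕ =>
      M.ρ0 s0 * (M.γ ^ t * ∑ s, M.distFrom π s0 t s * ∑ a, π s a * M.r s a)) :=
    fun s0 => (summable_geom_bound hγ0 hγ1 _ B (fun t => hg t s0)).mul_left _
  symm
  calc ∑ s0, M.ρ0 s0 * M.V π s0
      = ∑ s0, ∑' t : ℕ, M.ρ0 s0 *
          (M.γ ^ t * ∑ s, M.distFrom π s0 t s * ∑ a, π s a * M.r s a) := by
        refine Finset.sum_congr rfl fun s0 _ => ?_
        rw [MDP.V, tsum_mul_left]
    _ = ∑' t : ℕ, ∑ s0, M.ρ0 s0 *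
          (M.γ ^ t * ∑ s, M.distFrom π s0 t s * ∑ a, π s a * M.r s a) :=
        (Summable.tsum_finsetSum fun s0 _ => hsum s0).symm
    _ = M.η π := by
        rw [MDP.η]
        refine tsum_congr fun t => ?_
        calc ∑ s0, M.ρ0 s0 * (M.γ ^ t * ∑ s, M.distFrom π s0 t s * ∑ a, π s a * M.r s a)
            = M.γ ^ t * ∑ s0, M.ρ0 s0 * ∑ s, M.distFrom π s0 t s * ∑ a, π s a * M.r s a := by
              rw [Finset.mul_sum]
              exact Finset.sum_congr rfl fun s0 _ => by ring
          _ = M.γ ^ t * ∑ s, M.stateDist π t s * ∑ a, π s a * M.r s a := by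
              congr 1
              calc ∑ s0, M.ρ0 s0 * ∑ s, M.distFrom π s0 t s * ∑ a, π s a * M.r s a
                  = ∑ s0, ∑ s, M.ρ0 s0 * M.distFrom π s0 t s * ∑ a, π s a * M.r s a := by
                    refine Finset.sum_congr rfl fun s0 _ => ?_
                    rw [Finset.mul_sum]
                    exact Finset.sum_congr rfl fun s _ => by ring
                _ = ∑ s, ∑ s0, M.ρ0 s0 * M.distFrom π s0 t s * ∑ a, π s a * M.r s a :=
                    Finset.sum_comm
                _ = ∑ s, M.stateDist π t s * ∑ a, π s a * M.r s a := by
                    refine Finset.sum_congr rfl fun s _ => ?_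
                    rw [mixture M π t s, Finset.sum_mul]

lemma stateDist_le_one (M : MDP S A) (hM : M.Valid) (π : S → A → ℝ) (hπ : IsPolicy π)
    (t : ℕ) (s : S) : M.stateDist π t s ≤ 1 := by
  rw [← stateDist_sum_one M hM π hπ t]
  exact Finset.single_le_sum (fun s' _ => stateDist_nonneg M hM π hπ t s') (Finset.mem_univ s)

lemma rho_swap (M : MDP S A) (hM : M.Valid) (π' : S → A → ℝ) (hπ' : IsPolicy π')
    (f : S → ℝ) :
    ∑ s, M.ρvisit π' s * f s = ∑' t : ℕ, M.γ ^ t * ∑ s, M.stateDist π' t s * f s := by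
  have hγ0 := hM.2.2.2.2.1.le
  have hγ1 := hM.2.2.2.2.2
  set C := ∑ s, |f s| with hC
  have hfC : ∀ s, |f s| ≤ C :=
    fun s => Finset.single_le_sum (fun s' _ => abs_nonneg (f s')) (Finset.mem_univ s)
  have hsum : ∀ s : S, Summable (fun t : ℕ => M.γ ^ t * (M.stateDist π' t s * f s)) := by
    intro s
    refine summable_geom_bound hγ0 hγ1 _ C fun t => ?_
    rw [abs_mul, abs_of_nonneg (stateDist_nonneg M hM π' hπ' t s)]
    calc M.stateDist π' t s * |f s| ≤ 1 * |f s| :=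
          mul_le_mul_of_nonneg_right (stateDist_le_one M hM π' hπ' t s) (abs_nonneg _)
      _ ≤ C := by rw [one_mul]; exact hfC s
  calc ∑ s, M.ρvisit π' s * f s
      = ∑ s, ∑' t : ℕ, M.γ ^ t * (M.stateDist π' t s * f s) := by
        refine Finset.sum_congr rfl fun s _ => ?_
        rw [MDP.ρvisit, ← tsum_mul_right]
        exact tsum_congr fun t => by ring
    _ = ∑' t : ℕ, ∑ s, M.γ ^ t * (M.stateDist π' t s * f s) :=
        (Summable.tsum_finsetSum fun s _ => hsum s).symm
    _ = ∑' t : ℕ, M.γ ^ t * ∑ s, M.stateDist π' t s * f s := by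
        refine tsum_congr fun t => ?_
        rw [Finset.mul_sum]

end Aux3

/-- For any two policies `π` and `π'` on a finite-state discounted MDP,
`η(π') = η(π) + Σ_s ρ_{π'}(s) Σ_a π'(a|s) A_π(s,a)`. -/
theorem stmt0 {S A : Type} [Fintype S] [Fintype A] [DecidableEq S]
    (M : MDP S A) (hM : M.Valid) (π π' : S → A → ℝ)
    (hπ : IsPolicy π) (hπ' : IsPolicy π') :
    M.η π' = M.η π + ∑ s, M.ρvisit π' s * ∑ a, π' s a * M.Adv π s a := by
  have hγ0 := hM.2.2.2.2.1.le
  have hγ1 := hM.2.2.2.2.2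
  set B := ∑ s', ∑ a, |M.r s' a| with hBdef
  set C := B * (1 - M.γ)⁻¹ with hCdef
  -- the inner advantage sum
  have hF : ∀ s, ∑ a, π' s a * M.Adv π s a =
      (∑ a, π' s a * M.r s a)
        + M.γ * (∑ a, π' s a * ∑ s', M.P s a s' * M.V π s') - M.V π s := by
    intro s
    simp only [MDP.Adv, MDP.Q]
    have h : ∀ a, π' s a * (M.r s a + M.γ * ∑ s', M.P s a s' * M.V π s' - M.V π s)
        = π' s a * M.r s a + M.γ * (π' s a * ∑ s', M.P s a s' * M.V π s')
          - π' s a * M.V π s := fun a => by ring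
    simp only [h, Finset.sum_add_distrib, Finset.sum_sub_distrib, ← Finset.mul_sum,
      ← Finset.sum_mul, hπ'.2 s, one_mul]
  -- split the outer sum into three pieces
  have hsplit : ∑ s, M.ρvisit π' s * ∑ a, π' s a * M.Adv π s a
      = (∑ s, M.ρvisit π' s * ∑ a, π' s a * M.r s a)
        + M.γ * (∑ s, M.ρvisit π' s * ∑ a, π' s a * ∑ s', M.P s a s' * M.V π s')
        - ∑ s, M.ρvisit π' s * M.V π s := by
    simp only [hF]
    rw [Finset.mul_sum, ← Finset.sum_add_distrib, ← Finset.sum_sub_distrib]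
    exact Finset.sum_congr rfl fun s _ => by ring
  -- Z t : discounted state-value average at time t
  set Z : ℕ → ℝ := fun t => ∑ s, M.stateDist π' t s * M.V π s with hZdef
  have hVC : ∀ s, |M.V π s| ≤ C := fun s => V_abs_le M hM π hπ s
  have hZC : ∀ t, |Z t| ≤ C := fun t =>
    avg_abs_le _ _ _ (stateDist_nonneg M hM π' hπ' t) (stateDist_sum_one M hM π' hπ' t) hVC
  have hZsum : Summable (fun t : ℕ => M.γ ^ t * Z t) := summable_geom_bound hγ0 hγ1 Z C hZC
  -- the "one-step look-ahead" average equals Z (t+1)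
  have hYZ : ∀ t : ℕ,
      ∑ s, M.stateDist π' t s * ∑ a, π' s a * ∑ s', M.P s a s' * M.V π s' = Z (t + 1) := by
    intro t
    rw [step_avg M π' (M.stateDist π' t) (M.V π)]
    refine Finset.sum_congr rfl fun s'' _ => ?_
    rfl
  -- first piece is η π'
  have hE1 : ∑ s, M.ρvisit π' s * ∑ a, π' s a * M.r s a = M.η π' := by
    rw [rho_swap M hM π' hπ' (fun s => ∑ a, π' s a * M.r s a), MDP.η]
  -- third piece
  have hE3 : ∑ s, M.ρvisit π' s * M.V π s = ∑' t : ℕ, M.γ ^ t * Z t :=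
    rho_swap M hM π' hπ' (M.V π)
  -- second piece telescopes
  have hshift := Summable.tsum_eq_zero_add hZsum
  have hZ0 : Z 0 = M.η π := by
    rw [eta_eq M hM π hπ]
    rfl
  have hE2 : M.γ * (∑ s, M.ρvisit π' s * ∑ a, π' s a * ∑ s', M.P s a s' * M.V π s')
      = (∑' t : ℕ, M.γ ^ t * Z t) - M.η π := by
    rw [rho_swap M hM π' hπ' (fun s => ∑ a, π' s a * ∑ s', M.P s a s' * M.V π s')]
    simp only [hYZ]
    rw [← tsum_mul_left]
    have h1 : ∀ t : ℕ, M.γ * (M.γ ^ t * Z (t + 1)) = M.γ ^ (t + 1) * Z (t + 1) :=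
      fun t => by ring
    rw [tsum_congr h1]
    have h2 : (∑' t : ℕ, M.γ ^ (t + 1) * Z (t + 1))
        = (∑' t : ℕ, M.γ ^ t * Z t) - M.γ ^ 0 * Z 0 := by
      rw [hshift]; ring
    rw [h2, pow_zero, one_mul, hZ0]
  rw [hsplit, hE1, hE2, hE3]
  ring
end

section
/- Suppose η(π_{k+1}) ≥ L_{π_k}(π_{k+1}) − 4Āγα²/(1−γ)² with α = max_s D_TV(π_k(·|s), π_{k+1}(·|s)), and L_{π_k}(π_{k+1}) − L_{π_k}(π_k) ≥ min(1,(1−γ)δ_k)·A*_{π_k} > 0, and E_{s∼ρ_{π_k}}[D_TV(π_k(·|s), π_{k+1}(·|s))] ≤ δ_k with ρ_{π_k}(s) ≥ p_0 > 0 for all s. Then the trust region ratio r_k = (η(π_{k+1}) − η(π_k)) / (L_{π_k}(π_{k+1}) − L_{π_k}(π_k)) satisfies r_k ≥ 1 − 4Āγδ_k² / (p_0²(1−γ)² min(1,(1−γ)δ_k) A*_{π_k}). -/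
open scoped BigOperators

/-- Total variation distance between two distributions on a finite action set. -/
noncomputable def DTV {A : Type} [Fintype A] (p q : A → ℝ) : ℝ :=
  (1/2) * ∑ a, |p a - q a|

/-- Trust region ratio lower bound in the unparameterized case: under the
TRPO surrogate bound (with `α = max_s D_TV(π_k(·|s), π_{k+1}(·|s))`), the sufficient increase
bound, and the trust region constraint with `ρ_{π_k}(s) ≥ p0 > 0`, the ratio satisfies
`r_k ≥ 1 − 4Āγδ² / (p0²(1−γ)² min(1,(1−γ)δ) A*)`. -/
theorem stmt9 {S A : Type} [Fintype S] [Fintype A] [Nonempty S]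
    (πk πk1 : S → A → ℝ) (ρ : S → ℝ)
    (ηk ηk1 Lk Lk1 δ Abar γ p0 Astar : ℝ)
    (hγ : 0 < γ ∧ γ < 1) (hp0 : 0 < p0) (hρ : ∀ s, p0 ≤ ρ s)
    (hAbar : 0 ≤ Abar) (hδ : 0 < δ)
    (hLη : Lk = ηk)
    (hsurr : ηk1 ≥ Lk1 - 4 * Abar * γ *
      (Finset.univ.sup' Finset.univ_nonempty (fun s => DTV (πk s) (πk1 s)))^2 / (1 - γ)^2)
    (himp : Lk1 - Lk ≥ min 1 ((1 - γ) * δ) * Astar)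
    (hpos : 0 < min 1 ((1 - γ) * δ) * Astar)
    (hconstr : ∑ s, ρ s * DTV (πk s) (πk1 s) ≤ δ) :
    (ηk1 - ηk) / (Lk1 - Lk) ≥
      1 - 4 * Abar * γ * δ^2 / (p0^2 * (1 - γ)^2 * min 1 ((1 - γ) * δ) * Astar) := by
  obtain ⟨hγ0, hγ1⟩ := hγ
  have h1γ : 0 < 1 - γ := by linarith
  set M := Finset.univ.sup' Finset.univ_nonempty (fun s => DTV (πk s) (πk1 s)) with hM
  have hDTVnn : ∀ s : S, 0 ≤ DTV (πk s) (πk1 s) := by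
    intro s; unfold DTV
    have : 0 ≤ ∑ a, |πk s a - πk1 s a| :=
      Finset.sum_nonneg fun a _ => abs_nonneg _
    linarith
  have hMnn : 0 ≤ M := by
    obtain ⟨s⟩ := ‹Nonempty S›
    exact le_trans (hDTVnn s) (Finset.le_sup' (fun s => DTV (πk s) (πk1 s)) (Finset.mem_univ s))
  have hMδ : p0 * M ≤ δ := by
    obtain ⟨s0, hs0, hs0eq⟩ := Finset.exists_mem_eq_sup' (Finset.univ_nonempty (α := S))
      (fun s => DTV (πk s) (πk1 s))
    calc p0 * M = p0 * DTV (πk s0) (πk1 s0) := by rw [hM, hs0eq]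
      _ ≤ ρ s0 * DTV (πk s0) (πk1 s0) :=
        mul_le_mul_of_nonneg_right (hρ s0) (hDTVnn s0)
      _ ≤ ∑ s, ρ s * DTV (πk s) (πk1 s) :=
        Finset.single_le_sum (fun s _ => mul_nonneg (le_trans hp0.le (hρ s)) (hDTVnn s)) hs0
      _ ≤ δ := hconstr
  set m := min 1 ((1 - γ) * δ) * Astar with hm
  have hDpos : 0 < Lk1 - Lk := lt_of_lt_of_le hpos himp
  set C := 4 * Abar * γ * M ^ 2 / (1 - γ) ^ 2 with hC
  set C' := 4 * Abar * γ * δ ^ 2 / (p0 ^ 2 * (1 - γ) ^ 2) with hC'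
  have hCnn : 0 ≤ C := by positivity
  have hCC' : C ≤ C' := by
    rw [hC, hC', div_le_div_iff₀ (by positivity) (by positivity)]
    have h1 : p0 * M * (p0 * M) ≤ δ * δ := mul_le_mul hMδ hMδ (mul_nonneg hp0.le hMnn) hδ.le
    have h2 : (0:ℝ) ≤ 4 * Abar * γ * (1 - γ)^2 := by positivity
    nlinarith [mul_nonneg h2 (sub_nonneg.mpr h1)]
  have hC'nn : 0 ≤ C' := le_trans hCnn hCC'
  have hnum : ηk1 - ηk ≥ (Lk1 - Lk) - C := by
    rw [← hLη]; linarith [hsurr]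
  have step1 : (ηk1 - ηk) / (Lk1 - Lk) ≥ ((Lk1 - Lk) - C) / (Lk1 - Lk) := by
    gcongr
  have step2 : ((Lk1 - Lk) - C) / (Lk1 - Lk) = 1 - C / (Lk1 - Lk) := by
    field_simp
  have step3 : C / (Lk1 - Lk) ≤ C' / m :=
    div_le_div₀ hC'nn hCC' hpos himp
  have step4 : C' / m = 4 * Abar * γ * δ^2 / (p0^2 * (1 - γ)^2 * min 1 ((1 - γ) * δ) * Astar) := by
    rw [hC', hm, div_div]; ring_nf
  linarith [step1, step3, step2 ▸ step1, step4 ▸ step3]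
end

section
/- Consider a sequence of real numbers η_k (objective values) that is monotonically nondecreasing and bounded above, trust-region radii δ_k > 0 updated by δ_{k+1} = γ1 δ_k if r_k ≥ β1, γ2 δ_k if r_k ∈ [β0, β1), γ3 δ_k otherwise (with 0 < γ3 < γ2 ≤ 1 < γ1, 0 < β0 < β1 < 1). Suppose for all k ≥ K: (i) η_{k+1} − η_k ≥ β0 c δ_k whenever r_k ≥ β0 (with c > 0 fixed), and (ii) r_k ≥ 1 − C δ_k for a fixed C > 0. Then δ_k → 0 is impossible while also having δ_k bounded below; consequently the hypotheses lead to a contradiction, i.e., it cannot hold that the per-step improvement bound (i) and the ratio bound (ii) persist with the fixed constant c for all large k. -/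
/-- Abstract trust-region contradiction: a nondecreasing, bounded-above
objective sequence with the three-branch radius update rule cannot persistently satisfy both
the per-step improvement bound (i) and the ratio lower bound (ii) for all large `k`. -/
theorem stmt11 (η δ r : ℕ → ℝ) (β0 β1 γ1 γ2 γ3 c C : ℝ) (K : ℕ)
    (hβ0 : 0 < β0) (hβ01 : β0 < β1) (hβ1 : β1 < 1)
    (hγ3 : 0 < γ3) (hγ32 : γ3 < γ2) (hγ2 : γ2 ≤ 1) (hγ1 : 1 < γ1)
    (hc : 0 < c) (hC : 0 < C)
    (hδpos : ∀ k, 0 < δ k)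
    (hmono : Monotone η) (hbdd : ∃ B, ∀ k, η k ≤ B)
    (hupdate : ∀ k, δ (k+1) =
      if β1 ≤ r k then γ1 * δ k else if β0 ≤ r k then γ2 * δ k else γ3 * δ k)
    (himp : ∀ k, K ≤ k → β0 ≤ r k → η (k+1) - η k ≥ β0 * c * δ k)
    (hratio : ∀ k, K ≤ k → r k ≥ 1 - C * δ k) :
    False := by
  have hdbarpos : 0 < (1 - β1) / C := div_pos (by linarith) hC
  set ε : ℝ := min (δ K) (γ3 * ((1 - β1) / C)) with hεdef
  have hεpos : 0 < ε := lt_min (hδpos K) (mul_pos hγ3 hdbarpos)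
  -- Claim A : δ k ≥ ε for all k ≥ K
  have claimA : ∀ k, K ≤ k → ε ≤ δ k := by
    intro k hk
    induction k, hk using Nat.le_induction with
    | base => exact min_le_left _ _
    | succ k hk ih =>
      rw [hupdate k]
      by_cases h1 : δ k ≤ (1 - β1) / C
      · have h1' : C * δ k ≤ 1 - β1 := by
          rw [le_div_iff₀ hC] at h1; linarith [h1]
        have hr : β1 ≤ r k := by have := hratio k hk; linarith
        rw [if_pos hr]
        nlinarith [hδpos k]
      · push_neg at h1
        have h2 : γ3 * ((1 - β1) / C) ≤ γ3 * δ k := by nlinarith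
        have h3 : ε ≤ γ3 * δ k := le_trans (min_le_right _ _) h2
        split_ifs with h h'
        · nlinarith [hδpos k]
        · nlinarith [hδpos k]
        · exact h3
  -- Claim B : successful iterations occur arbitrarily late
  have claimB : ∀ m, ∃ k, m ≤ k ∧ K ≤ k ∧ β0 ≤ r k := by
    intro m
    by_contra h
    push_neg at h
    set m' := max m K with hm'
    have hgeo : ∀ n, δ (m' + n) = γ3 ^ n * δ m' := by
      intro n
      induction n with
      | zero => simp
      | succ n ih =>
        have hk : K ≤ m' + n := le_trans (le_max_right _ _) (Nat.le_add_right _ _)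
        have hm : m ≤ m' + n := le_trans (le_max_left _ _) (Nat.le_add_right _ _)
        have hr := h _ hm hk
        have hstep : δ (m' + n + 1) = γ3 * δ (m' + n) := by
          rw [hupdate]
          rw [if_neg (by linarith), if_neg (by linarith)]
        show δ (m' + n + 1) = _
        rw [hstep, ih, pow_succ]
        ring
    obtain ⟨n, hn⟩ := exists_pow_lt_of_lt_one (div_pos hεpos (hδpos m'))
      (show γ3 < 1 by linarith)
    have hlt : γ3 ^ n * δ m' < ε := by
      rw [lt_div_iff₀ (hδpos m')] at hn; exact hn
    have hge : ε ≤ δ (m' + n) :=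
      claimA _ (le_trans (le_max_right _ _) (Nat.le_add_right _ _))
    rw [hgeo n] at hge
    linarith
  -- accumulate improvements
  set a : ℝ := β0 * c * ε with hadef
  have hapos : 0 < a := mul_pos (mul_pos hβ0 hc) hεpos
  have key : ∀ n : ℕ, ∃ k, η K + (n + 1) * a ≤ η (k + 1) := by
    intro n
    induction n with
    | zero =>
      obtain ⟨k, hmk, hKk, hrk⟩ := claimB K
      have h1 := himp k hKk hrk
      have h2 : β0 * c * ε ≤ β0 * c * δ k := by
        have := claimA k hKk
        nlinarith
      have h3 : η K ≤ η k := hmono hKk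
      exact ⟨k, by push_cast; linarith⟩
    | succ n ih =>
      obtain ⟨k, hk⟩ := ih
      obtain ⟨k', h1, h2, h3⟩ := claimB (k + 1)
      have h4 := himp k' h2 h3
      have h5 : β0 * c * ε ≤ β0 * c * δ k' := by
        have := claimA k' h2
        nlinarith
      have h6 : η (k + 1) ≤ η k' := hmono h1
      exact ⟨k', by push_cast; push_cast at hk; linarith⟩
  obtain ⟨B, hB⟩ := hbdd
  obtain ⟨n, hn⟩ := exists_nat_gt ((B - η K) / a)
  have hn' : B - η K < n * a := by
    rw [div_lt_iff₀ hapos] at hn; exact hn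
  obtain ⟨k, hk⟩ := key n
  have := hB (k + 1)
  have : ((n : ℝ)) * a ≤ ((n : ℝ) + 1) * a := by nlinarith
  linarith
end

section
/- Cauchy-point improvement for Gaussian-mean trust region: let L(μ) be twice continuously differentiable on the trust region B_k = {μ : E_{s∼ρ_k} D_KL(N(μ_k(s),Σ_k) ‖ N(μ(s),Σ_k)) ≤ δ_k}, with ‖∇²L(μ)‖ ≤ h_k on B_k, g_k = ∇L(μ_k) ≠ 0, and σ^(i)_k ≥ σ̲ > 0. Then the maximizer μ_{k+1} of L over B_k satisfies L(μ_{k+1}) − L(μ_k) ≥ ‖g_k‖² · min( 1/(2h_k), σ̲√δ_k/(2‖g_k‖) ). -/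
open scoped BigOperators

set_option maxHeartbeats 1000000

/-- Cauchy-point improvement for the Gaussian-mean trust region: if `L` is
twice continuously differentiable on the KL-ball `B`, with Hessian bounded by `h` on `B`,
nonzero gradient `g_k` at `μ_k`, and `σ^(i) ≥ σ̲ > 0`, then the maximizer `μ_{k+1}` of `L`
over `B` satisfies
`L(μ_{k+1}) − L(μ_k) ≥ ‖g_k‖² · min(1/(2h), σ̲√δ/(2‖g_k‖))`. -/
theorem stmt15 {n : ℕ} (L : EuclideanSpace ℝ (Fin n) → ℝ)
    (μk μk1 : EuclideanSpace ℝ (Fin n)) (σ : Fin n → ℝ) (σlb δ h : ℝ)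
    (hσlb : 0 < σlb) (hσ : ∀ i, σlb ≤ σ i) (hδ : 0 < δ) (hh : 0 < h)
    (B : Set (EuclideanSpace ℝ (Fin n)))
    (hB : B = {μ | (1/2) * ∑ i, (μ i - μk i)^2 / (σ i)^2 ≤ δ})
    (hC2 : ContDiff ℝ 2 L)
    (hHess : ∀ μ ∈ B, ‖iteratedFDeriv ℝ 2 L μ‖ ≤ h)
    (hg : gradient L μk ≠ 0)
    (hmem : μk1 ∈ B) (hmax : ∀ μ ∈ B, L μ ≤ L μk1) :
    L μk1 - L μk ≥ ‖gradient L μk‖^2 *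
      min (1/(2*h)) (σlb * Real.sqrt δ / (2 * ‖gradient L μk‖)) := by
  classical
  set g := gradient L μk with hgdef
  have hgnorm : 0 < ‖g‖ := norm_pos_iff.mpr hg
  have hsqrt : 0 < Real.sqrt δ := Real.sqrt_pos.mpr hδ
  set τ : ℝ := min (1/h) (σlb * Real.sqrt δ / ‖g‖) with hτdef
  have hτpos : 0 < τ := lt_min (by positivity) (by positivity)
  set v : EuclideanSpace ℝ (Fin n) := τ • g with hvdef
  -- norm of g squared as a sum
  have hnormg_sq : ‖g‖^2 = ∑ i, (g i)^2 := by
    rw [EuclideanSpace.norm_eq, Real.sq_sqrt (by positivity)]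
    simp [Real.norm_eq_abs, sq_abs]
  -- feasibility of points on the segment
  have memB : ∀ t ∈ Set.Icc (0:ℝ) 1, μk + t • v ∈ B := by
    intro t ht
    rw [hB]
    have hbound : ∀ i, ((μk + t • v) i - μk i)^2 / (σ i)^2 ≤ (τ * g i)^2 / σlb^2 := by
      intro i
      have hσi : σlb ≤ σ i := hσ i
      have h1 : ((μk + t • v) i - μk i)^2 = t^2 * (τ * g i)^2 := by
        simp [hvdef, PiLp.add_apply, PiLp.smul_apply, smul_eq_mul]
        ring
      have ht2 : t^2 ≤ 1 := by nlinarith [ht.1, ht.2]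
      have h2 : t^2 * (τ * g i)^2 ≤ (τ * g i)^2 := by
        nlinarith [mul_nonneg (sub_nonneg.mpr ht2) (sq_nonneg (τ * g i))]
      have h3 : (τ * g i)^2 / (σ i)^2 ≤ (τ * g i)^2 / σlb^2 := by
        apply div_le_div_of_nonneg_left (sq_nonneg _) (by positivity)
        nlinarith [hσlb, hσi]
      calc ((μk + t • v) i - μk i)^2 / (σ i)^2 = t^2 * (τ * g i)^2 / (σ i)^2 := by rw [h1]
        _ ≤ (τ * g i)^2 / (σ i)^2 := by
            apply div_le_div_of_nonneg_right h2 (by positivity) |>.trans_eq rfl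
        _ ≤ (τ * g i)^2 / σlb^2 := h3
    have hsum : ∑ i, ((μk + t • v) i - μk i)^2 / (σ i)^2 ≤ τ^2 * ‖g‖^2 / σlb^2 := by
      calc ∑ i, ((μk + t • v) i - μk i)^2 / (σ i)^2 ≤ ∑ i, (τ * g i)^2 / σlb^2 :=
            Finset.sum_le_sum fun i _ => hbound i
        _ = τ^2 * (∑ i, (g i)^2) / σlb^2 := by
            rw [← Finset.sum_div]
            congr 1
            rw [Finset.mul_sum]
            exact Finset.sum_congr rfl (fun i _ => by ring)
        _ = τ^2 * ‖g‖^2 / σlb^2 := by rw [hnormg_sq]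
    have hτle : τ ≤ σlb * Real.sqrt δ / ‖g‖ := min_le_right _ _
    have hτg : τ * ‖g‖ ≤ σlb * Real.sqrt δ := (le_div_iff₀ hgnorm).mp hτle
    have hfin : τ^2 * ‖g‖^2 / σlb^2 ≤ δ := by
      have : (τ * ‖g‖)^2 ≤ (σlb * Real.sqrt δ)^2 := by
        apply sq_le_sq' _ hτg
        nlinarith [hτpos, hgnorm]
      have h2 : (σlb * Real.sqrt δ)^2 = σlb^2 * δ := by
        rw [mul_pow, Real.sq_sqrt hδ.le]
      rw [div_le_iff₀ (by positivity)]
      nlinarith [this]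
    show (1/2) * ∑ i, ((μk + t • v) i - μk i)^2 / (σ i)^2 ≤ δ
    nlinarith [hsum, hfin]
  -- segment is inside B
  have hseg : segment ℝ μk (μk + v) ⊆ B := by
    rw [segment_eq_image']
    rintro x ⟨t, ht, rfl⟩
    simpa using memB t ht
  -- differentiability facts
  have hdiffL : Differentiable ℝ L := hC2.differentiable (by norm_num)
  have hC1' : ContDiff ℝ 1 (fderiv ℝ L) := hC2.fderiv_right (by norm_num)
  have hdiff' : Differentiable ℝ (fderiv ℝ L) := hC1'.differentiable (by norm_num)
  -- second derivative bound on B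
  have hbd2 : ∀ x ∈ B, ‖fderiv ℝ (fderiv ℝ L) x‖ ≤ h := by
    intro x hx
    have e1 : ‖fderiv ℝ (fderiv ℝ L) x‖ = ‖iteratedFDeriv ℝ 1 (fderiv ℝ L) x‖ := by
      rw [← norm_iteratedFDeriv_zero (𝕜 := ℝ) (f := fderiv ℝ (fderiv ℝ L)) (x := x),
        norm_iteratedFDeriv_fderiv]
    have e2 : ‖iteratedFDeriv ℝ 1 (fderiv ℝ L) x‖ = ‖iteratedFDeriv ℝ 2 L x‖ :=
      norm_iteratedFDeriv_fderiv
    rw [e1, e2]; exact hHess x hx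
  -- Lipschitz bound on the derivative along the segment
  have hlip : ∀ x ∈ segment ℝ μk (μk + v),
      ‖fderiv ℝ L x - fderiv ℝ L μk‖ ≤ h * ‖x - μk‖ := by
    intro x hx
    exact (convex_segment μk (μk + v)).norm_image_sub_le_of_norm_fderiv_le
      (fun y _ => hdiff'.differentiableAt) (fun y hy => hbd2 y (hseg hy))
      (left_mem_segment ℝ μk (μk + v)) hx
  -- the curve and its derivative
  have hcurve : ∀ t : ℝ, HasDerivAt (fun s : ℝ => μk + s • v) v t := by
    intro t
    simpa using ((hasDerivAt_id t).smul_const v).const_add μk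
  have hLd : ∀ t : ℝ, HasDerivAt (fun s : ℝ => L (μk + s • v))
      (fderiv ℝ L (μk + t • v) v) t := by
    intro t
    exact ((hdiffL (μk + t • v)).hasFDerivAt).comp_hasDerivAt t (hcurve t)
  -- the auxiliary function
  set φ : ℝ → ℝ := fun t => L (μk + t • v) - t * (fderiv ℝ L μk v) + h * ‖v‖^2 * t^2 / 2
    with hφdef
  have hφd : ∀ t : ℝ, HasDerivAt φ
      (fderiv ℝ L (μk + t • v) v - fderiv ℝ L μk v + h * ‖v‖^2 * t) t := by
    intro t
    have h1 := (hLd t).sub (hasDerivAt_mul_const ((fderiv ℝ L μk) v))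
    have h2 : HasDerivAt (fun s : ℝ => h * ‖v‖^2 * s^2 / 2) (h * ‖v‖^2 * t) t := by
      have := ((hasDerivAt_pow 2 t).const_mul (h * ‖v‖^2)).div_const 2
      refine this.congr_deriv ?_
      simp only [Nat.cast_ofNat, pow_one]
      ring
    exact h1.add h2
  have hφmono : MonotoneOn φ (Set.Icc (0:ℝ) 1) := by
    apply monotoneOn_of_deriv_nonneg (convex_Icc 0 1)
    · exact Continuous.continuousOn
        (continuous_iff_continuousAt.mpr fun t => (hφd t).continuousAt)
    · intro t _
      exact (hφd t).differentiableAt.differentiableWithinAt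
    · intro t ht
      rw [interior_Icc] at ht
      rw [(hφd t).deriv]
      have hmem' : μk + t • v ∈ segment ℝ μk (μk + v) := by
        rw [segment_eq_image']
        exact ⟨t, ⟨ht.1.le, ht.2.le⟩, by simp⟩
      have hlipt := hlip _ hmem'
      have hnorm : ‖μk + t • v - μk‖ = t * ‖v‖ := by
        simp [norm_smul, abs_of_nonneg ht.1.le]
      have key : fderiv ℝ L μk v - fderiv ℝ L (μk + t • v) v ≤ h * (t * ‖v‖) * ‖v‖ := by
        have h1 : fderiv ℝ L μk v - fderiv ℝ L (μk + t • v) v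
            = -((fderiv ℝ L (μk + t • v) - fderiv ℝ L μk) v) := by
          simp [ContinuousLinearMap.sub_apply]
        have h2 : ‖(fderiv ℝ L (μk + t • v) - fderiv ℝ L μk) v‖
            ≤ ‖fderiv ℝ L (μk + t • v) - fderiv ℝ L μk‖ * ‖v‖ :=
          ContinuousLinearMap.le_opNorm _ _
        have h3 : ‖fderiv ℝ L (μk + t • v) - fderiv ℝ L μk‖ * ‖v‖ ≤ h * (t * ‖v‖) * ‖v‖ := by
          apply mul_le_mul_of_nonneg_right _ (norm_nonneg _)
          rw [← hnorm]; exact hlipt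
        rw [h1]
        calc -((fderiv ℝ L (μk + t • v) - fderiv ℝ L μk) v)
            ≤ ‖(fderiv ℝ L (μk + t • v) - fderiv ℝ L μk) v‖ := neg_le_of_neg_le (by
              have := abs_le.mp (le_refl |(fderiv ℝ L (μk + t • v) - fderiv ℝ L μk) v|)
              rw [Real.norm_eq_abs]; linarith [neg_abs_le ((fderiv ℝ L (μk + t • v) - fderiv ℝ L μk) v)])
          _ ≤ h * (t * ‖v‖) * ‖v‖ := h2.trans h3
      nlinarith [key]
  -- conclude Taylor-type inequality at t = 1
  have htaylor : L (μk + v) ≥ L μk + fderiv ℝ L μk v - h * ‖v‖^2 / 2 := by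
    have := hφmono (Set.mem_Icc.mpr ⟨le_refl 0, zero_le_one⟩)
      (Set.mem_Icc.mpr ⟨zero_le_one, le_refl 1⟩) zero_le_one
    simp only [hφdef, zero_smul, add_zero, zero_mul, one_smul, one_mul, mul_zero] at this
    simp only [one_pow] at this
    linarith
  -- inner product computation
  have hinner : fderiv ℝ L μk v = τ * ‖g‖^2 := by
    have h1 : (fderiv ℝ L μk) v = @inner ℝ _ _ g v := by
      rw [hgdef]
      unfold gradient
      rw [InnerProductSpace.toDual_symm_apply]
    rw [h1, hvdef, real_inner_smul_right, real_inner_self_eq_norm_sq]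
  have hnormv : ‖v‖ = τ * ‖g‖ := by
    rw [hvdef, norm_smul, Real.norm_eq_abs, abs_of_pos hτpos]
  -- final step
  have hmemv : μk + v ∈ B := by simpa using memB 1 (Set.mem_Icc.mpr ⟨zero_le_one, le_refl 1⟩)
  have hL1 : L (μk + v) ≤ L μk1 := hmax _ hmemv
  have hτh : h * τ ≤ 1 := by
    have : τ ≤ 1/h := min_le_left _ _
    rw [le_div_iff₀ hh] at this
    linarith [this]
  have hmin : min (1/(2*h)) (σlb * Real.sqrt δ / (2 * ‖g‖)) = τ / 2 := by
    rw [hτdef, ← min_div_div_right (by norm_num : (0:ℝ) ≤ 2)]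
    congr 1
    · ring
    · ring
  rw [hmin]
  have key : τ * ‖g‖^2 - h * ‖v‖^2 / 2 ≥ ‖g‖^2 * (τ/2) := by
    rw [hnormv]
    have : h * (τ * ‖g‖)^2 ≤ τ * ‖g‖^2 := by
      have h1 : h * (τ * ‖g‖)^2 = (h * τ) * (τ * ‖g‖^2) := by ring
      rw [h1]
      nlinarith [hτpos, sq_nonneg ‖g‖, mul_pos hτpos (mul_pos hgnorm hgnorm)]
    nlinarith
  have := htaylor
  rw [hinner] at this
  linarith
end

section
/- Ratio bound for Gaussian policies: under Assumptions on the Gaussian parameterization (σ bounded below by σ̲) and bounded Hessian (h_k), and assuming the TRPO surrogate bound η(μ_{k+1},σ_{k+1}) ≥ L_{μ_k,σ_k}(μ_{k+1},σ_{k+1}) − 4Ā_kγδ_k²/(p_0²(1−γ)²) together with the sufficient-increase bound L_{μ_k,σ_k}(μ_{k+1},σ_{k+1}) − L_{μ_k,σ_k}(μ_k,σ_k) ≥ ‖g_k‖² min(1/(2h_k), σ̲√δ_k/(2‖g_k‖)) > 0, the ratio r_k satisfies r_k ≥ 1 − 8Ā_kγδ_k² max(‖g_k‖/(σ̲√δ_k),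 h_k) / (p_0²(1−γ)²‖g_k‖²). -/
/-- Ratio bound for Gaussian policies: under the TRPO surrogate bound and
the sufficient-increase bound, the trust region ratio satisfies
`r_k ≥ 1 − 8Ā_kγδ_k² max(‖g_k‖/(σ̲√δ_k), h_k) / (p0²(1−γ)²‖g_k‖²)`. -/
theorem stmt17 (ηk ηk1 Lk Lk1 Abar γ δ p0 g σlb h : ℝ)
    (hγ0 : 0 < γ) (hγ1 : γ < 1) (hp0 : 0 < p0) (hAbar : 0 ≤ Abar)
    (hg : 0 < g) (hσ : 0 < σlb) (hh : 0 < h) (hδ : 0 < δ)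
    (hLη : Lk = ηk)
    (hsurr : ηk1 ≥ Lk1 - 4 * Abar * γ * δ^2 / (p0^2 * (1 - γ)^2))
    (himp : Lk1 - Lk ≥ g^2 * min (1/(2*h)) (σlb * Real.sqrt δ / (2*g)))
    (hpos : 0 < g^2 * min (1/(2*h)) (σlb * Real.sqrt δ / (2*g))) :
    (ηk1 - ηk) / (Lk1 - Lk) ≥
      1 - 8 * Abar * γ * δ^2 * max (g / (σlb * Real.sqrt δ)) h /
        (p0^2 * (1 - γ)^2 * g^2) := by
  have hsq : 0 < Real.sqrt δ := Real.sqrt_pos.mpr hδ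
  have hs : 0 < σlb * Real.sqrt δ := mul_pos hσ hsq
  have hγ' : 0 < 1 - γ := by linarith
  have hP : 0 < p0^2 * (1 - γ)^2 := by positivity
  set B := 4 * Abar * γ * δ^2 / (p0^2 * (1 - γ)^2) with hB_def
  have hB : 0 ≤ B := by positivity
  set c := g^2 * min (1/(2*h)) (σlb * Real.sqrt δ / (2*g)) with hc_def
  have hD : 0 < Lk1 - Lk := lt_of_lt_of_le hpos himp
  have hM : 0 < max (g / (σlb * Real.sqrt δ)) h := lt_max_of_lt_right hh
  -- min = 1/(2*max)
  have hmin : min (1/(2*h)) (σlb * Real.sqrt δ / (2*g))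
      = 1 / (2 * max (g / (σlb * Real.sqrt δ)) h) := by
    rcases le_total (g / (σlb * Real.sqrt δ)) h with hc1 | hc1
    · rw [max_eq_right hc1, min_eq_left]
      rw [div_le_div_iff₀ (by positivity) (by positivity)]
      have : g ≤ h * (σlb * Real.sqrt δ) := (div_le_iff₀ hs).mp hc1
      nlinarith
    · rw [max_eq_left hc1, min_eq_right]
      · rw [div_eq_div_iff (by positivity) (by positivity)]
        field_simp
      · rw [div_le_div_iff₀ (by positivity) (by positivity)]
        have : h * (σlb * Real.sqrt δ) ≤ g := (le_div_iff₀ hs).mp hc1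
        nlinarith
  have step1 : 1 - B / (Lk1 - Lk) ≤ (ηk1 - ηk) / (Lk1 - Lk) := by
    have heq : 1 - B / (Lk1 - Lk) = (Lk1 - Lk - B) / (Lk1 - Lk) := by
      field_simp
    rw [heq, div_le_div_iff₀ hD hD]
    have : Lk1 - B ≤ ηk1 := hsurr
    nlinarith
  have step2 : B / (Lk1 - Lk) ≤ B / c :=
    div_le_div_of_nonneg_left hB hpos himp
  have hrhs : B / c = 8 * Abar * γ * δ^2 * max (g / (σlb * Real.sqrt δ)) h /
      (p0^2 * (1 - γ)^2 * g^2) := by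
    rw [hc_def, hmin, hB_def]
    field_simp
    ring
  calc (ηk1 - ηk) / (Lk1 - Lk) ≥ 1 - B / (Lk1 - Lk) := step1
    _ ≥ 1 - B / c := by linarith
    _ = _ := by rw [hrhs]
end

section
/- Abstract convergence of gradient norms along successful trust-region iterates: let {η_k} be nondecreasing and bounded above, suppose on every successful iteration q one has η_{q+1} − η_q ≥ β0 min(ε²/(2h), σ̲ε√δ_q/2) whenever ‖g_q‖ ≥ ε, that ‖μ_{q+1} − μ_q‖ ≤ 2σ̄√δ_q (steps bounded by the radius), and that g is Lipschitz in μ. If lim inf ‖g_k‖ = 0 but lim sup ‖g_k‖ ≥ 2ε > 0, then summing improvements between indices k_i (where ‖g_{k_i}‖ ≥ 2ε) and t_i (first later successful index with ‖g_{t_i}‖ ≤ ε) forces ‖μ_{t_i} − μ_{k_i}‖ → 0 and hence ‖g_{t_i} − g_{k_i}‖ → 0, contradicting ‖g_{t_i} − g_{k_i}‖ ≥ ε. Therefore lim_{k→∞} ‖g_k‖ = 0. -/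
/-- Abstract convergence of gradient norms along successful trust-region
iterates: with a nondecreasing bounded objective, a per-success sufficient increase, steps
bounded by the radius, no movement on unsuccessful iterations, a Lipschitz gradient, and
`lim inf ‖g_k‖ = 0`, one has `lim_{k→∞} ‖g_k‖ = 0`. -/
theorem stmt19 {E : Type} [NormedAddCommGroup E] [NormedSpace ℝ E]
    (η : ℕ → ℝ) (μ g : ℕ → E) (δ : ℕ → ℝ) (Succ : ℕ → Prop)
    (β0 h σlb σub Lip : ℝ)
    (hβ0 : 0 < β0) (hh : 0 < h) (hσlb : 0 < σlb) (hσ : σlb ≤ σub) (hLip : 0 < Lip)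
    (hδ : ∀ k, 0 < δ k)
    (hmono : Monotone η) (hbdd : ∃ B, ∀ k, η k ≤ B)
    (himp : ∀ ε > 0, ∀ q, Succ q → ε ≤ ‖g q‖ →
      η (q+1) - η q ≥ β0 * min (ε^2 / (2*h)) (σlb * ε * Real.sqrt (δ q) / 2))
    (hstep : ∀ q, Succ q → ‖μ (q+1) - μ q‖ ≤ 2 * σub * Real.sqrt (δ q))
    (hfix : ∀ q, ¬ Succ q → μ (q+1) = μ q)
    (hLipg : ∀ j k, ‖g j - g k‖ ≤ Lip * ‖μ j - μ k‖)
    (hliminf : Filter.liminf (fun k => ‖g k‖) Filter.atTop = 0) :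
    Filter.Tendsto (fun k => ‖g k‖) Filter.atTop (nhds 0) := by
  classical
  by_contra hc
  -- the monotone bounded sequence η converges to its supremum L
  have hbdd' : BddAbove (Set.range η) := by
    obtain ⟨B, hB⟩ := hbdd
    exact ⟨B, by rintro x ⟨k, rfl⟩; exact hB k⟩
  set L := ⨆ k, η k with hLdef
  have hηle : ∀ k, η k ≤ L := fun k => le_ciSup hbdd' k
  have hηtend : Filter.Tendsto η Filter.atTop (nhds L) :=
    tendsto_atTop_ciSup hmono hbdd'
  -- failure of convergence gives ε0 > 0 with ‖g k‖ ≥ ε0 frequently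
  rw [Metric.tendsto_atTop] at hc
  push_neg at hc
  obtain ⟨ε0, hε0pos, hfreq⟩ := hc
  set ε := ε0 / 2 with hεdef
  have hε : 0 < ε := by positivity
  have hσub : 0 < σub := lt_of_lt_of_le hσlb hσ
  set C := 4 * σub / (β0 * σlb * ε) with hCdef
  have hCpos : 0 < C := by positivity
  set d := min (β0 * (ε^2 / (2*h))) (ε / (Lip * C)) with hddef
  have hdpos : 0 < d := lt_min (by positivity) (by positivity)
  -- pick N with L - η N < d
  obtain ⟨N, hN⟩ := ((tendsto_order.1 hηtend).1 (L - d) (by linarith)).exists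
  -- the key summation bound: as long as the gradient stays ≥ ε past an index a ≥ N,
  -- the total movement is controlled by the increase of η
  have key : ∀ a, N ≤ a → ∀ m, a ≤ m → (∀ q, a ≤ q → q < m → ε ≤ ‖g q‖) →
      ‖μ m - μ a‖ ≤ C * (η m - η a) := by
    intro a hNa m
    induction m with
    | zero =>
      intro h0 _
      have ha0 : a = 0 := Nat.le_zero.mp h0
      simp [ha0]
    | succ m ih =>
      intro ham hbig
      by_cases ha' : a ≤ m
      · have ihv := ih ha' (fun q hq hq' => hbig q hq (Nat.lt_succ_of_lt hq'))
        have tri : ‖μ (m+1) - μ a‖ ≤ ‖μ (m+1) - μ m‖ + ‖μ m - μ a‖ :=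
          norm_sub_le_norm_sub_add_norm_sub _ _ _
        by_cases hs : Succ m
        · have hgm : ε ≤ ‖g m‖ := hbig m ha' (Nat.lt_succ_self m)
          have himp' := himp ε hε m hs hgm
          have hup : η (m+1) ≤ L := hηle _
          have hlow' : η a ≤ η m := hmono ha'
          have hlowN : η N ≤ η a := hmono hNa
          have hd1 : d ≤ β0 * (ε^2 / (2*h)) := min_le_left _ _
          have hΔ : η (m+1) - η m < β0 * (ε^2 / (2*h)) := by linarith
          have hminr : min (ε^2 / (2*h)) (σlb * ε * Real.sqrt (δ m) / 2)
              = σlb * ε * Real.sqrt (δ m) / 2 := by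
            have hlt : min (ε^2 / (2*h)) (σlb * ε * Real.sqrt (δ m) / 2) < ε^2 / (2*h) := by
              by_contra hge
              push_neg at hge
              have hle := min_le_left (ε^2 / (2*h)) (σlb * ε * Real.sqrt (δ m) / 2)
              have heq : min (ε^2 / (2*h)) (σlb * ε * Real.sqrt (δ m) / 2) = ε^2 / (2*h) :=
                le_antisymm hle hge
              rw [heq] at himp'
              linarith
            exact min_eq_right (le_of_lt ((min_lt_iff.mp hlt).resolve_left (lt_irrefl _)))
          rw [hminr] at himp'
          have hstep' := hstep m hs
          have hsq : 0 ≤ Real.sqrt (δ m) := Real.sqrt_nonneg _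
          have hbound : 2 * σub * Real.sqrt (δ m) ≤ C * (η (m+1) - η m) := by
            rw [hCdef, div_mul_eq_mul_div, le_div_iff₀ (by positivity)]
            nlinarith [himp', hsq, hσub.le, hσlb.le, hε.le, hβ0.le]
          calc ‖μ (m+1) - μ a‖ ≤ ‖μ (m+1) - μ m‖ + ‖μ m - μ a‖ := tri
            _ ≤ 2 * σub * Real.sqrt (δ m) + C * (η m - η a) := add_le_add hstep' ihv
            _ ≤ C * (η (m+1) - η m) + C * (η m - η a) := by linarith
            _ = C * (η (m+1) - η a) := by ring
        · rw [hfix m hs]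
          have hη' : η m ≤ η (m+1) := hmono (Nat.le_succ m)
          have := mul_le_mul_of_nonneg_left
            (by linarith : η m - η a ≤ η (m+1) - η a) hCpos.le
          linarith
      · push_neg at ha'
        have hkeq : a = m + 1 := by omega
        rw [hkeq]
        simp
  -- the gradient norm goes below ε frequently
  have hfreqlow : ∃ᶠ n in Filter.atTop, ‖g n‖ < ε := by
    by_contra hno
    rw [Filter.not_frequently] at hno
    obtain ⟨n0, hn0⟩ := Filter.eventually_atTop.mp hno
    have hn0' : ∀ n ≥ n0, ε ≤ ‖g n‖ := fun n hn => le_of_not_gt (hn0 n hn)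
    set K := max N n0 with hKdef
    have hKN : N ≤ K := le_max_left _ _
    have hbig : ∀ m, K ≤ m → ‖g m‖ ≤ ‖g K‖ + Lip * (C * (L - η K)) := by
      intro m hm
      have h1 := key K hKN m hm
        (fun q hq _ => hn0' q (le_trans (le_max_right _ _) hq))
      have h2 : ‖g m - g K‖ ≤ Lip * ‖μ m - μ K‖ := hLipg m K
      have h3 : ‖g m‖ - ‖g K‖ ≤ ‖g m - g K‖ := norm_sub_norm_le _ _
      have h4 : η m ≤ L := hηle m
      have h5 : C * (η m - η K) ≤ C * (L - η K) :=
        mul_le_mul_of_nonneg_left (by linarith) hCpos.le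
      nlinarith [norm_nonneg (μ m - μ K), hLip.le]
    have hbddg : Filter.IsBoundedUnder (· ≤ ·) Filter.atTop (fun n => ‖g n‖) :=
      ⟨‖g K‖ + Lip * (C * (L - η K)),
        Filter.eventually_map.2 (Filter.eventually_atTop.2 ⟨K, hbig⟩)⟩
    have hliml : ε ≤ Filter.liminf (fun n => ‖g n‖) Filter.atTop :=
      Filter.le_liminf_of_le hbddg.isCoboundedUnder_ge
        (Filter.eventually_atTop.2 ⟨n0, hn0'⟩)
    rw [hliminf] at hliml
    linarith
  -- pick k ≥ N with ‖g k‖ ≥ 2ε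
  obtain ⟨k, hkN, hgk⟩ := hfreq N
  have hgk' : 2 * ε ≤ ‖g k‖ := by
    rw [Real.dist_eq, sub_zero, abs_of_nonneg (norm_nonneg _)] at hgk
    linarith
  have hLk : L - η k < d := by
    have := hmono hkN
    linarith
  -- the first index t ≥ k with ‖g t‖ < ε
  obtain ⟨t0, ht0k, ht0⟩ := (Filter.frequently_atTop.mp hfreqlow) k
  have hS : ∃ n, k ≤ n ∧ ‖g n‖ < ε := ⟨t0, ht0k, ht0⟩
  set t := Nat.find hS with htdef
  obtain ⟨htk, hgt⟩ := Nat.find_spec hS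
  have hmin_t : ∀ m, k ≤ m → m < t → ε ≤ ‖g m‖ := by
    intro m hkm hmt
    have hm := Nat.find_min hS hmt
    push_neg at hm
    exact hm hkm
  have hfinal := key k hkN t htk hmin_t
  have hηt : η t ≤ L := hηle t
  have hd2 : d ≤ ε / (Lip * C) := min_le_right _ _
  have hμ : ‖μ t - μ k‖ < ε / Lip := by
    have h1 : η t - η k < ε / (Lip * C) := by linarith
    have h2 : C * (η t - η k) < C * (ε / (Lip * C)) := mul_lt_mul_of_pos_left h1 hCpos
    have h3 : C * (ε / (Lip * C)) = ε / Lip := by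
      field_simp
    linarith
  have hg : ‖g t - g k‖ ≤ Lip * ‖μ t - μ k‖ := hLipg t k
  have hub : ‖g t - g k‖ < ε := by
    have h4 := mul_lt_mul_of_pos_left hμ hLip
    have h5 : Lip * (ε / Lip) = ε := by field_simp
    linarith
  have hlb : ε ≤ ‖g t - g k‖ := by
    have h4 := norm_sub_norm_le (g k) (g t)
    rw [norm_sub_rev] at h4
    linarith
  linarith
end
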